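/- The two 7-dimensional real Lie algebras g₇⁹ and g₇¹⁰ are not isomorphic. -/
import Mathlib


open Module

/-- The `k`-th standard coordinate vector in `ℝ⁷`. -/
def e7 (k : Fin 7) : Fin 7 → ℝ := Pi.single k 1

/-- Structure constants (for `i < j`) of `g₇⁹`, basis `X₁,…,X₇` numbered `0,…,6`. -/
def c79 (i j : Fin 7) : Fin 7 → ℝ :=
  if (i, j) = (0, 1) then e7 2
  else if (i, j) = (0, 2) then e7 3
  else if (i, j) = (1, 2) then e7 4
  else if (i, j) = (0, 5) then e7 1
  else if (i, j) = (1, 5) then -e7 0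
  else if (i, j) = (3, 5) then e7 4
  else if (i, j) = (4, 5) then -e7 3
  else if (i, j) = (0, 6) then -e7 0
  else if (i, j) = (1, 6) then -e7 1
  else if (i, j) = (2, 6) then (-2 : ℝ) • e7 2
  else if (i, j) = (3, 6) then (-3 : ℝ) • e7 3
  else if (i, j) = (4, 6) then (-3 : ℝ) • e7 4
  else 0

/-- Structure constants (for `i < j`) of `g₇¹⁰`, basis `X₁,…,X₇` numbered `0,…,6`. -/
def c710 (i j : Fin 7) : Fin 7 → ℝ :=
  if (i, j) = (0, 1) then e7 2
  else if (i, j) = (0, 4) then -e7 0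
  else if (i, j) = (1, 4) then -e7 1
  else if (i, j) = (2, 4) then (-2 : ℝ) • e7 2
  else if (i, j) = (0, 5) then e7 1
  else if (i, j) = (1, 5) then -e7 0
  else if (i, j) = (3, 6) then -e7 3
  else 0

lemma c79_high (i j k : Fin 7) (hk : 5 ≤ (k : ℕ)) : c79 i j k = 0 := by
  have h5 : k = 5 ∨ k = 6 := by omega
  rcases h5 with rfl | rfl <;> simp [c79, ite_apply, e7, Pi.single_apply]

lemma c710_high (i j k : Fin 7) (hk : 4 ≤ (k : ℕ)) : c710 i j k = 0 := by
  have h5 : k = 4 ∨ k = 5 ∨ k = 6 := by omega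
  rcases h5 with rfl | rfl | rfl <;> simp [c710, ite_apply, e7, Pi.single_apply]

lemma my_sum_lie {g : Type} [LieRing g] (f : Fin 7 → g) (y : g) :
    ⁅∑ i, f i, y⁆ = ∑ i, ⁅f i, y⁆ :=
  map_sum (AddMonoidHom.mk' (fun x => ⁅x, y⁆) (fun a b => add_lie a b y)) f Finset.univ

lemma my_lie_sum {g : Type} [LieRing g] (x : g) (f : Fin 7 → g) :
    ⁅x, ∑ i, f i⁆ = ∑ i, ⁅x, f i⁆ :=
  map_sum (AddMonoidHom.mk' (fun y => ⁅x, y⁆) (fun a b => lie_add x a b)) f Finset.univ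

/-- Any bracket lies in a submodule containing all brackets of basis vectors. -/
lemma lie_mem_of_basis {g : Type} [LieRing g] [LieAlgebra ℝ g] (b : Basis (Fin 7) ℝ g)
    (T : Submodule ℝ g) (h : ∀ i j : Fin 7, ⁅b i, b j⁆ ∈ T) (x y : g) : ⁅x, y⁆ ∈ T := by
  rw [← b.sum_repr x, ← b.sum_repr y, my_sum_lie]
  refine Submodule.sum_mem _ fun i _ => ?_
  rw [smul_lie]
  refine Submodule.smul_mem _ _ ?_
  rw [my_lie_sum]
  refine Submodule.sum_mem _ fun j _ => ?_
  rw [lie_smul]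
  exact Submodule.smul_mem _ _ (h i j)

theorem g79_vs_g710 {g₁ : Type} [LieRing g₁] [LieAlgebra ℝ g₁] (b₁ : Basis (Fin 7) ℝ g₁)
    (h₁ : ∀ i j : Fin 7, i < j → ⁅b₁ i, b₁ j⁆ = ∑ k, c79 i j k • b₁ k)
    {g₂ : Type} [LieRing g₂] [LieAlgebra ℝ g₂] (b₂ : Basis (Fin 7) ℝ g₂)
    (h₂ : ∀ i j : Fin 7, i < j → ⁅b₂ i, b₂ j⁆ = ∑ k, c710 i j k • b₂ k) :
    IsEmpty (g₁ ≃ₗ⁅ℝ⁆ g₂) := by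
  constructor
  intro e
  -- the commutator spans
  set S₁ : Submodule ℝ g₁ := Submodule.span ℝ {x : g₁ | ∃ a c : g₁, ⁅a, c⁆ = x} with hS₁
  set S₂ : Submodule ℝ g₂ := Submodule.span ℝ {x : g₂ | ∃ a c : g₂, ⁅a, c⁆ = x} with hS₂
  -- spans of low basis vectors
  set v₁ : Fin 5 → g₁ := fun m => b₁ ⟨(m : ℕ), by omega⟩ with hv₁
  set v₂ : Fin 4 → g₂ := fun m => b₂ ⟨(m : ℕ), by omega⟩ with hv₂
  have hv₁li : LinearIndependent ℝ v₁ :=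
    b₁.linearIndependent.comp _ (fun a c hac => by
      simpa [Fin.ext_iff] using congrArg Fin.val hac)
  have hv₂li : LinearIndependent ℝ v₂ :=
    b₂.linearIndependent.comp _ (fun a c hac => by
      simpa [Fin.ext_iff] using congrArg Fin.val hac)
  set T₁ : Submodule ℝ g₁ := Submodule.span ℝ (Set.range v₁) with hT₁
  set T₂ : Submodule ℝ g₂ := Submodule.span ℝ (Set.range v₂) with hT₂
  have hT₁mem : ∀ k : Fin 7, (k : ℕ) < 5 → b₁ k ∈ T₁ := fun k hk =>
    Submodule.subset_span ⟨⟨(k : ℕ), hk⟩, by simp [hv₁]⟩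
  have hT₂mem : ∀ k : Fin 7, (k : ℕ) < 4 → b₂ k ∈ T₂ := fun k hk =>
    Submodule.subset_span ⟨⟨(k : ℕ), hk⟩, by simp [hv₂]⟩
  -- brackets of basis vectors lie in T
  have hb₁ : ∀ i j : Fin 7, ⁅b₁ i, b₁ j⁆ ∈ T₁ := by
    have key : ∀ i j : Fin 7, i < j → ⁅b₁ i, b₁ j⁆ ∈ T₁ := by
      intro i j hij
      rw [h₁ i j hij]
      refine Submodule.sum_mem _ fun k _ => ?_
      rcases lt_or_ge (k : ℕ) 5 with hk | hk
      · exact Submodule.smul_mem _ _ (hT₁mem k hk)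
      · rw [c79_high i j k hk, zero_smul]; exact T₁.zero_mem
    intro i j
    rcases lt_trichotomy i j with hij | rfl | hij
    · exact key i j hij
    · simp
    · rw [← lie_skew]; exact T₁.neg_mem (key j i hij)
  have hb₂ : ∀ i j : Fin 7, ⁅b₂ i, b₂ j⁆ ∈ T₂ := by
    have key : ∀ i j : Fin 7, i < j → ⁅b₂ i, b₂ j⁆ ∈ T₂ := by
      intro i j hij
      rw [h₂ i j hij]
      refine Submodule.sum_mem _ fun k _ => ?_
      rcases lt_or_ge (k : ℕ) 4 with hk | hk
      · exact Submodule.smul_mem _ _ (hT₂mem k hk)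
      · rw [c710_high i j k hk, zero_smul]; exact T₂.zero_mem
    intro i j
    rcases lt_trichotomy i j with hij | rfl | hij
    · exact key i j hij
    · simp
    · rw [← lie_skew]; exact T₂.neg_mem (key j i hij)
  -- S = T
  have hST₁ : S₁ = T₁ := by
    refine le_antisymm (Submodule.span_le.mpr ?_) (Submodule.span_le.mpr ?_)
    · rintro x ⟨a, c, rfl⟩
      exact lie_mem_of_basis b₁ T₁ hb₁ a c
    · rintro x ⟨m, rfl⟩
      have hm : (m : ℕ) < 5 := m.isLt
      refine Submodule.subset_span ?_
      fin_cases m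
      · exact ⟨b₁ 6, b₁ 0, by
          rw [← lie_skew, h₁ 0 6 (by decide)]
          simp [hv₁, c79, e7, Fin.sum_univ_seven, Pi.single_apply]
          first
          | done
          | exact congrArg b₁ (by decide)⟩
      · exact ⟨b₁ 6, b₁ 1, by
          rw [← lie_skew, h₁ 1 6 (by decide)]
          simp [hv₁, c79, e7, Fin.sum_univ_seven, Pi.single_apply]
          first
          | done
          | exact congrArg b₁ (by decide)⟩
      · exact ⟨b₁ 0, b₁ 1, by
          rw [h₁ 0 1 (by decide)]
          simp [hv₁, c79, e7, Fin.sum_univ_seven, Pi.single_apply]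
          first
          | done
          | exact congrArg b₁ (by decide)⟩
      · exact ⟨b₁ 0, b₁ 2, by
          rw [h₁ 0 2 (by decide)]
          simp [hv₁, c79, e7, Fin.sum_univ_seven, Pi.single_apply]
          first
          | done
          | exact congrArg b₁ (by decide)⟩
      · exact ⟨b₁ 1, b₁ 2, by
          rw [h₁ 1 2 (by decide)]
          simp [hv₁, c79, e7, Fin.sum_univ_seven, Pi.single_apply]
          first
          | done
          | exact congrArg b₁ (by decide)⟩
  have hST₂ : S₂ = T₂ := by
    refine le_antisymm (Submodule.span_le.mpr ?_) (Submodule.span_le.mpr ?_)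
    · rintro x ⟨a, c, rfl⟩
      exact lie_mem_of_basis b₂ T₂ hb₂ a c
    · rintro x ⟨m, rfl⟩
      refine Submodule.subset_span ?_
      fin_cases m
      · exact ⟨b₂ 4, b₂ 0, by
          rw [← lie_skew, h₂ 0 4 (by decide)]
          simp [hv₂, c710, e7, Fin.sum_univ_seven, Pi.single_apply]
          first
          | done
          | exact congrArg b₂ (by decide)⟩
      · exact ⟨b₂ 4, b₂ 1, by
          rw [← lie_skew, h₂ 1 4 (by decide)]
          simp [hv₂, c710, e7, Fin.sum_univ_seven, Pi.single_apply]
          first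
          | done
          | exact congrArg b₂ (by decide)⟩
      · exact ⟨b₂ 0, b₂ 1, by
          rw [h₂ 0 1 (by decide)]
          simp [hv₂, c710, e7, Fin.sum_univ_seven, Pi.single_apply]
          first
          | done
          | exact congrArg b₂ (by decide)⟩
      · exact ⟨b₂ 6, b₂ 3, by
          rw [← lie_skew, h₂ 3 6 (by decide)]
          simp [hv₂, c710, e7, Fin.sum_univ_seven, Pi.single_apply]
          first
          | done
          | exact congrArg b₂ (by decide)⟩
  -- the equivalence maps S₁ onto S₂
  have hmap : S₁.map (e.toLinearEquiv : g₁ →ₗ[ℝ] g₂) = S₂ := by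
    rw [hS₁, hS₂, Submodule.map_span]
    congr 1
    ext y
    constructor
    · rintro ⟨x, ⟨a, c, rfl⟩, rfl⟩
      exact ⟨e a, e c, (LieHom.map_lie e.toLieHom a c).symm⟩
    · rintro ⟨a, c, rfl⟩
      refine ⟨⁅e.symm a, e.symm c⁆, ⟨e.symm a, e.symm c, rfl⟩, ?_⟩
      rw [show (e.toLinearEquiv : g₁ →ₗ[ℝ] g₂) ⁅e.symm a, e.symm c⁆
            = e ⁅e.symm a, e.symm c⁆ from rfl,
        show e ⁅e.symm a, e.symm c⁆ = ⁅e (e.symm a), e (e.symm c)⁆ from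
          LieHom.map_lie e.toLieHom _ _]
      simp
  have hrk := LinearEquiv.finrank_map_eq e.toLinearEquiv S₁
  rw [hmap, hST₁, hST₂] at hrk
  have hrk₁ : finrank ℝ T₁ = 5 := by
    rw [hT₁]; simpa using finrank_span_eq_card hv₁li
  have hrk₂ : finrank ℝ T₂ = 4 := by
    rw [hT₂]; simpa using finrank_span_eq_card hv₂li
  rw [hrk₁, hrk₂] at hrk
  exact absurd hrk (by norm_num)
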